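/- Let λ be a labeling, v^C a starting vertex of the counter graph associated with v where I(v) = J_ℓ, and π a cycle-free finite prefix of an infinite path of 𝐂(λ) starting at v^C. Then |π| ≤ |V| + 2·mR(λ_ℓ) + Σ_{r=|J_ℓ|+1}^{|Π|} ( |V| + 2·max{mR(λ_j) : J_j > J_ℓ, |J_j| = r} ), where mR(λ_j) is the maximal finite value of λ restricted to region V^{J_j}. -/

import Mathlib

open scoped Classical

namespace SPE

variable {V : Type*} {P : Type*}

/-- Vertices of the extended game: a base vertex together with the set of players
having already visited their target set. -/
abbrev XV (V P : Type*) := V × Set P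

/-- Edges of the extended game induced by base edges `E` and target sets `F`. -/
def XEdge (E : V → V → Prop) (F : P → Set V) (a b : XV V P) : Prop :=
  E a.1 b.1 ∧ b.2 = a.2 ∪ {i | b.1 ∈ F i}

/-- Plays of the extended game starting at `x`. -/
def IsPlay (E : V → V → Prop) (F : P → Set V) (x : XV V P) (ρ : ℕ → XV V P) : Prop :=
  ρ 0 = x ∧ ∀ k, XEdge E F (ρ k) (ρ (k + 1))

/-- Cost of player `i` along the suffix `ρ_{≥ n}`: the least `k` such that `i` belongs to
the second component of `ρ (n + k)`, and `⊤` if there is no such `k`. -/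
noncomputable def costFrom (ρ : ℕ → XV V P) (n : ℕ) (i : P) : ℕ∞ :=
  sInf ((fun k : ℕ => (k : ℕ∞)) '' {k | i ∈ (ρ (n + k)).2})

/-- Cost of player `i` along the play `ρ` of the extended game. -/
noncomputable def cost (ρ : ℕ → XV V P) (i : P) : ℕ∞ := costFrom ρ 0 i

/-- `λ`-consistency of a play. -/
def Consistent (own : V → P) (lam : XV V P → ℕ∞) (ρ : ℕ → XV V P) : Prop :=
  ∀ n, costFrom ρ n (own (ρ n).1) ≤ lam (ρ n)

/-- The set `Λ(x)` of `λ`-consistent plays from `x`. -/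
def Lam (E : V → V → Prop) (F : P → Set V) (own : V → P) (lam : XV V P → ℕ∞)
    (x : XV V P) : Set (ℕ → XV V P) :=
  {ρ | IsPlay E F x ρ ∧ Consistent own lam ρ}

/-- The initial labeling `λ⁰`. -/
noncomputable def lam0 (own : V → P) : XV V P → ℕ∞ :=
  fun v => if own v.1 ∈ v.2 then 0 else ⊤

/-- The labeling update operator. -/
noncomputable def update (E : V → V → Prop) (F : P → Set V) (own : V → P)
    (lam : XV V P → ℕ∞) (v : XV V P) : ℕ∞ :=
  if own v.1 ∈ v.2 then 0
  else ⨅ w ∈ {w : XV V P | XEdge E F v w},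
    (1 + sSup ((fun ρ => cost ρ (own v.1)) '' Lam E F own lam w))

/-- Vertices of the counter graph: an extended vertex with one counter per player. -/
abbrev CV (V P : Type*) := XV V P × (P → ℕ∞)

/-- Edges of the counter graph `𝐂(λ)`. -/
def CEdge (E : V → V → Prop) (F : P → Set V) (own : V → P) (lam : XV V P → ℕ∞)
    (a b : CV V P) : Prop :=
  XEdge E F a.1 b.1 ∧
  ∀ i : P,
    (i ∈ b.1.2 ∧ b.2 i = 0) ∨
    (i ∉ b.1.2 ∧ own b.1.1 ≠ i ∧ 1 < a.2 i ∧ b.2 i = a.2 i - 1) ∨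
    (i ∉ b.1.2 ∧ own b.1.1 = i ∧ 1 < a.2 i ∧ b.2 i = min (a.2 i - 1) (lam b.1))

/-- The starting vertex `v^C` of the counter graph associated with `v`. -/
noncomputable def startC (own : V → P) (lam : XV V P → ℕ∞) (v : XV V P) : CV V P :=
  (v, fun i => if i ∈ v.2 then 0 else if own v.1 = i then lam v else ⊤)

/-- The maximal finite range of `λ` restricted to a set `S` of extended vertices. -/
noncomputable def mR (lam : XV V P → ℕ∞) (S : Set (XV V P)) : ℕ :=
  sSup {c : ℕ | ∃ w ∈ S, lam w = (c : ℕ∞)}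

set_option linter.unusedSectionVars false

section Aux

variable {V P : Type*} [Fintype V] [Fintype P]
variable {E : V → V → Prop} {F : P → Set V} {own : V → P} {lam : XV V P → ℕ∞}
variable {π : ℕ → CV V P}

/-- `lam` at a vertex, when finite, is at most the maximal finite range over its region. -/
lemma lam_le_mR (w : XV V P) (h : lam w ≠ ⊤) :
    lam w ≤ (mR lam {w' : XV V P | w'.2 = w.2} : ℕ∞) := by
  have h1 : ((lam w).toNat : ℕ∞) = lam w := ENat.coe_toNat h
  rw [← h1, Nat.cast_le]
  refine le_csSup ?_ ?_
  · refine Set.Finite.bddAbove (Set.Finite.subset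
      (Set.finite_range (fun w' : XV V P => (lam w').toNat)) ?_)
    rintro c ⟨w', -, hw'⟩
    exact ⟨w', by simp [hw']⟩
  · exact ⟨w, rfl, h1.symm⟩

variable (hπ : ∀ k, CEdge E F own lam (π k) (π (k + 1)))
include hπ

/-- regions are monotone along the path -/
lemma reg_mono : ∀ {m n : ℕ}, m ≤ n → (π m).1.2 ⊆ (π n).1.2 := by
  have h1 : ∀ k, (π k).1.2 ⊆ (π (k+1)).1.2 := by
    intro k
    rw [(hπ k).1.2]
    exact Set.subset_union_left
  intro m n hmn
  induction n, hmn using Nat.le_induction with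
  | base => exact subset_rfl
  | succ n hmn ih => exact ih.trans (h1 n)

/-- counters are zero on the region (successor step version) -/
lemma counter_zero (k : ℕ) (i : P) (hi : i ∈ (π (k+1)).1.2) : (π (k+1)).2 i = 0 := by
  rcases (hπ k).2 i with ⟨-, h⟩ | ⟨h, -⟩ | ⟨h, -⟩
  · exact h
  · exact absurd hi h
  · exact absurd hi h

/-- counters strictly decrease off the region -/
lemma counter_step (k : ℕ) (i : P) (hi : i ∉ (π (k+1)).1.2) :
    1 < (π k).2 i ∧ (π (k+1)).2 i ≤ (π k).2 i - 1 := by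
  rcases (hπ k).2 i with ⟨h, -⟩ | ⟨-, -, h1, h2⟩ | ⟨-, -, h1, h2⟩
  · exact absurd h hi
  · exact ⟨h1, h2.le⟩
  · exact ⟨h1, h2.le.trans (min_le_left _ _)⟩

/-- a counter becoming finite is an owner reset to `lam` -/
lemma counter_birth (k : ℕ) (i : P) (hi : i ∉ (π (k+1)).1.2)
    (htop : (π k).2 i = ⊤) (hfin : (π (k+1)).2 i ≠ ⊤) :
    own (π (k+1)).1.1 = i ∧ (π (k+1)).2 i = lam (π (k+1)).1 := by
  rcases (hπ k).2 i with ⟨h, -⟩ | ⟨-, -, -, h2⟩ | ⟨-, ho, -, h2⟩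
  · exact absurd h hi
  · rw [htop] at h2; simp at h2; exact absurd h2 hfin
  · rw [htop] at h2; simp at h2
    exact ⟨ho, h2⟩

end Aux

section Aux2

set_option linter.unusedSectionVars false

variable {V P : Type*} [Fintype V] [Fintype P]
variable {E : V → V → Prop} {F : P → Set V} {own : V → P} {lam : XV V P → ℕ∞}
variable {π : ℕ → CV V P} {v : XV V P}
variable (hπ : ∀ k, CEdge E F own lam (π k) (π (k + 1)))
variable (hπ0 : π 0 = startC own lam v)
include hπ hπ0

lemma reach (k : ℕ) : Relation.ReflTransGen (XEdge E F) v (π k).1 := by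
  induction k with
  | zero => rw [hπ0]; exact Relation.ReflTransGen.refl
  | succ k ih => exact ih.tail (hπ k).1

/-- counters are zero on the region (all positions) -/
lemma counter_zero' (k : ℕ) (i : P) (hi : i ∈ (π k).1.2) : (π k).2 i = 0 := by
  match k with
  | 0 =>
    rw [hπ0] at hi ⊢
    simp only [startC] at hi ⊢
    simp [hi]
  | (k+1) => exact counter_zero hπ k i hi

/-- every finite off-region counter was born at an owner reset to a `lam`-value,
and has been decreasing ever since. -/
lemma birth_bound : ∀ k (i : P), i ∉ (π k).1.2 → (π k).2 i ≠ ⊤ →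
    ∃ b ≤ k, (∀ m, b ≤ m → m ≤ k → i ∉ (π m).1.2 ∧ (π m).2 i ≠ ⊤) ∧
      own (π b).1.1 = i ∧ (π b).2 i = lam (π b).1 ∧
      (π k).2 i + ((k - b : ℕ) : ℕ∞) ≤ (mR lam {w : XV V P | w.2 = (π b).1.2} : ℕ∞) := by
  intro k
  induction k with
  | zero =>
    intro i hi hfin
    have hval : (π 0).2 i = lam (π 0).1 ∧ own (π 0).1.1 = i := by
      rw [hπ0] at hi ⊢
      simp only [startC] at hi ⊢
      by_cases ho : own v.1 = i
      · simp [hi, ho]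
      · rw [hπ0] at hfin
        simp only [startC] at hfin
        simp [hi, ho] at hfin
    refine ⟨0, le_rfl, ?_, hval.2, hval.1, ?_⟩
    · intro m hm hm'
      have : m = 0 := Nat.le_zero.mp hm'
      subst this; exact ⟨hi, hfin⟩
    · simpa [hval.1] using lam_le_mR (lam := lam) (π 0).1 (hval.1 ▸ hfin)
  | succ k ih =>
    intro i hi hfin
    have hik : i ∉ (π k).1.2 := fun h => hi (reg_mono hπ (Nat.le_succ k) h)
    by_cases hc : (π k).2 i = ⊤
    · obtain ⟨ho, hv⟩ := counter_birth hπ k i hi hc hfin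
      refine ⟨k+1, le_rfl, ?_, ho, hv, ?_⟩
      · intro m h1 h2
        have : m = k+1 := le_antisymm h2 h1
        subst this; exact ⟨hi, hfin⟩
      · simpa [hv] using lam_le_mR (lam := lam) (π (k+1)).1 (hv ▸ hfin)
    · obtain ⟨b, hb, hint, ho, hval, hbd⟩ := ih i hik hc
      refine ⟨b, hb.trans (Nat.le_succ k), ?_, ho, hval, ?_⟩
      · intro m h1 h2
        by_cases hm : m ≤ k
        · exact hint m h1 hm
        · have : m = k+1 := by omega
          subst this; exact ⟨hi, hfin⟩
      · have h1 := (counter_step hπ k i hi).1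
        have h2 := (counter_step hπ k i hi).2
        have key : (π (k+1)).2 i + 1 ≤ (π k).2 i := by
          calc (π (k+1)).2 i + 1 ≤ ((π k).2 i - 1) + 1 := add_le_add_left h2 1
          _ = (π k).2 i := tsub_add_cancel_of_le h1.le
        have hnb : (k+1-b : ℕ) = (k-b)+1 := by omega
        rw [hnb]
        push_cast
        calc (π (k+1)).2 i + (((k-b:ℕ):ℕ∞) + 1)
            = ((π (k+1)).2 i + 1) + ((k-b:ℕ):ℕ∞) := by ring
          _ ≤ (π k).2 i + ((k-b:ℕ):ℕ∞) := add_le_add_left key _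
          _ ≤ _ := hbd

end Aux2

/-- length bound for cycle-free finite prefixes of infinite paths of
the counter graph `𝐂(λ)` starting at `v^C`, with `I(v) = J ℓ`. -/
theorem stmt13 {V P : Type*} [Fintype V] [Fintype P]
    (E : V → V → Prop) (F : P → Set V) (own : V → P) (lam : XV V P → ℕ∞)
    (N : ℕ) (J : ℕ → Set P)
    (hmono : ∀ a b, 1 ≤ a → a ≤ N → 1 ≤ b → b ≤ N → J a ⊆ J b → a ≤ b)
    (ℓ : ℕ) (hℓ1 : 1 ≤ ℓ) (hℓN : ℓ ≤ N)
    (v : XV V P) (hv : v.2 = J ℓ)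
    (hcover : ∀ w : XV V P, Relation.ReflTransGen (XEdge E F) v w →
      ∃ j, 1 ≤ j ∧ j ≤ N ∧ w.2 = J j)
    (π : ℕ → CV V P) (hπ0 : π 0 = startC own lam v)
    (hπ : ∀ k, CEdge E F own lam (π k) (π (k + 1)))
    (t : ℕ) (hnocycle : Set.InjOn π (Set.Iic t)) :
    t ≤ Fintype.card V + 2 * mR lam {w | w.2 = J ℓ} +
      ∑ r ∈ Finset.Icc ((J ℓ).ncard + 1) (Fintype.card P),
        (Fintype.card V + 2 * sSup {c : ℕ | ∃ j, ℓ < j ∧ j ≤ N ∧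
          (J j).ncard = r ∧ c = mR lam {w | w.2 = J j}}) := by
  classical
  set c0 := (J ℓ).ncard with hc0
  set cP := Fintype.card P with hcP
  set nV := Fintype.card V with hnV
  set M : ℕ → ℕ := fun r => sSup {c : ℕ | ∃ j, ℓ < j ∧ j ≤ N ∧
      (J j).ncard = r ∧ c = mR lam {w | w.2 = J j}} with hM
  set act : ℕ → Prop := fun k => ∃ i, i ∉ (π k).1.2 ∧ (π k).2 i ≠ ⊤ with hact
  set S : ℕ → Finset ℕ :=
    fun r => (Finset.range (t+1)).filter (fun k => (π k).1.2.ncard = r) with hS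
  set A : ℕ → Finset ℕ := fun r => (S r).filter act with hA
  set C : ℕ → Finset ℕ := fun r => (S r).filter (fun k => ¬ act k) with hC
  set RA : Finset ℕ := (Finset.Icc c0 cP).filter (fun r => (A r).Nonempty) with hRA
  set B : ℕ → ℕ := fun r =>
    if h : (A r).Nonempty then mR lam {w | w.2 = (π ((A r).min' h)).1.2} else 0 with hB
  -- basic region facts
  have hreg0 : (π 0).1.2 = J ℓ := by rw [hπ0]; exact hv
  have hregmono : ∀ {k1 k2 : ℕ}, k1 ≤ k2 → (π k1).1.2 ⊆ (π k2).1.2 := fun h => reg_mono hπ h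
  have hJsub : ∀ k, J ℓ ⊆ (π k).1.2 := fun k => hreg0 ▸ hregmono (Nat.zero_le k)
  have hncmono : ∀ {k1 k2 : ℕ}, k1 ≤ k2 → (π k1).1.2.ncard ≤ (π k2).1.2.ncard :=
    fun h => Set.ncard_le_ncard (hregmono h) (Set.toFinite _)
  have hsec_lb : ∀ k, c0 ≤ (π k).1.2.ncard :=
    fun k => Set.ncard_le_ncard (hJsub k) (Set.toFinite _)
  have hsec_ub : ∀ k, (π k).1.2.ncard ≤ cP := by
    intro k
    calc (π k).1.2.ncard ≤ (Set.univ : Set P).ncard :=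
          Set.ncard_le_ncard (Set.subset_univ _) Set.finite_univ
      _ = cP := by rw [Set.ncard_univ, Nat.card_eq_fintype_card]
  have hreg_eq : ∀ {k1 k2 : ℕ}, k1 ≤ k2 → (π k1).1.2.ncard = (π k2).1.2.ncard →
      (π k1).1.2 = (π k2).1.2 := by
    intro k1 k2 h he
    exact Set.eq_of_subset_of_ncard_le (hregmono h) (le_of_eq he.symm) (Set.toFinite _)
  have hSmem : ∀ r k, k ∈ S r ↔ (k ≤ t ∧ (π k).1.2.ncard = r) := by
    intro r k
    simp [hS, Finset.mem_filter, Finset.mem_range, Nat.lt_succ_iff]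
  have hregS : ∀ r {k1 k2 : ℕ}, k1 ∈ S r → k2 ∈ S r → (π k1).1.2 = (π k2).1.2 := by
    intro r k1 k2 h1 h2
    rcases le_total k1 k2 with h | h
    · exact hreg_eq h (((hSmem r k1).mp h1).2.trans (((hSmem r k2).mp h2).2).symm)
    · exact (hreg_eq h (((hSmem r k2).mp h2).2.trans (((hSmem r k1).mp h1).2).symm)).symm
  have hsqueeze : ∀ r {k1 k2 m : ℕ}, k1 ∈ S r → k2 ∈ S r → k1 ≤ m → m ≤ k2 → m ∈ S r := by
    intro r k1 k2 m h1 h2 hm1 hm2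
    rw [hSmem] at h1 h2 ⊢
    exact ⟨hm2.trans h2.1, le_antisymm (h2.2 ▸ hncmono hm2) (h1.2 ▸ hncmono hm1)⟩
  -- partition of positions
  have hpart : t + 1 = ∑ r ∈ Finset.Icc c0 cP, (S r).card := by
    have := Finset.card_eq_sum_card_fiberwise
      (s := Finset.range (t+1)) (t := Finset.Icc c0 cP)
      (f := fun k => (π k).1.2.ncard)
      (fun x _ => Finset.mem_Icc.mpr ⟨hsec_lb x, hsec_ub x⟩)
    simpa using this
  have hsplit : ∀ r, (S r).card = (C r).card + (A r).card := by
    intro r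
    rw [hA, hC]
    rw [add_comm]
    exact (Finset.card_filter_add_card_filter_not (p := act)).symm
  have hactne : ∀ k, ¬ act k → ∀ i, i ∉ (π k).1.2 → (π k).2 i = ⊤ := by
    intro k hk i hi
    by_contra hne
    exact hk ⟨i, hi, hne⟩
  have hCinj : ∀ r, Set.InjOn (fun k => (π k).1.1) ↑(C r) := by
    intro r k1 h1 k2 h2 hbase
    simp only [hC, Finset.coe_filter, Set.mem_setOf_eq] at h1 h2
    obtain ⟨hk1S, hk1n⟩ := h1
    obtain ⟨hk2S, hk2n⟩ := h2
    have hreg12 : (π k1).1.2 = (π k2).1.2 := hregS r hk1S hk2S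
    apply hnocycle (Set.mem_Iic.mpr ((hSmem r k1).mp hk1S).1)
      (Set.mem_Iic.mpr ((hSmem r k2).mp hk2S).1)
    apply Prod.ext
    · exact Prod.ext hbase hreg12
    · funext i
      by_cases hi : i ∈ (π k1).1.2
      · rw [counter_zero' hπ hπ0 k1 i hi, counter_zero' hπ hπ0 k2 i (hreg12 ▸ hi)]
      · rw [hactne k1 hk1n i hi, hactne k2 hk2n i (fun hc => hi (hreg12 ▸ hc))]
  -- calm bound
  have hcalm : ∀ r, (C r).card ≤ nV := by
    intro r
    have := Finset.card_le_card_of_injOn (fun k => (π k).1.1)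
      (fun a _ => Finset.mem_univ ((π a).1.1)) (hCinj r)
    rwa [Finset.card_univ] at this
  -- refund bound
  have hcalm_bad : ∀ r f, f ∈ A r → ∀ i0, own (π f).1.1 = i0 → i0 ∉ (π f).1.2 →
      lam (π f).1 = 0 → (C r).card + 1 ≤ nV := by
    intro r f hfA i0 hown hi0 hlam0
    have hfS : f ∈ S r := (Finset.mem_filter.mp hfA).1
    have hkey : ∀ k, k ∈ C r → (π k).1.1 ≠ (π f).1.1 := by
      intro k hk hbase
      obtain ⟨hkS, hkn⟩ := Finset.mem_filter.mp hk
      have hreg : (π k).1.2 = (π f).1.2 := hregS r hkS hfS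
      have hfst : (π k).1 = (π f).1 := Prod.ext hbase hreg
      have hi0k : i0 ∉ (π k).1.2 := by rw [hreg]; exact hi0
      have htop : (π k).2 i0 = ⊤ := hactne k hkn i0 hi0k
      have hlamk : lam (π k).1 = 0 := by rw [hfst]; exact hlam0
      cases k with
      | zero =>
        have h0 : (π 0).1 = v := by rw [hπ0]; rfl
        have hv2 : i0 ∉ v.2 := by rw [← h0]; exact hi0k
        have ho : own v.1 = i0 := by rw [← h0]; rw [hfst]; exact hown
        have : (π 0).2 i0 = lam v := by
          rw [hπ0]; simp only [startC]; simp [hv2, ho]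
        rw [this] at htop
        rw [h0] at hlamk
        rw [hlamk] at htop
        simp at htop
      | succ k' =>
        rcases (hπ k').2 i0 with ⟨h1, -⟩ | ⟨-, h2, -⟩ | ⟨-, -, -, h3⟩
        · exact hi0k h1
        · exact h2 (by rw [hfst]; exact hown)
        · rw [htop, hlamk] at h3
          simp at h3
    have hcard : (C r).card ≤ (Finset.univ.erase (π f).1.1).card := by
      apply Finset.card_le_card_of_injOn (fun k => (π k).1.1)
        (fun a ha => Finset.mem_erase.mpr ⟨hkey a ha, Finset.mem_univ _⟩) (hCinj r)
    rw [Finset.card_erase_of_mem (Finset.mem_univ _), Finset.card_univ] at hcard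
    have hV : 1 ≤ nV := by
      rw [hnV]
      exact Fintype.card_pos_iff.mpr ⟨(π 0).1.1⟩
    omega
  -- interval structure of active parts
  have hItv : ∀ r (h : (A r).Nonempty), ∀ m, (A r).min' h ≤ m → m ≤ (A r).max' h →
      m ∈ A r := by
    intro r h
    have hfA : (A r).min' h ∈ A r := Finset.min'_mem _ h
    have heA : (A r).max' h ∈ A r := Finset.max'_mem _ h
    have hfS : (A r).min' h ∈ S r := (Finset.mem_filter.mp hfA).1
    have heS : (A r).max' h ∈ S r := (Finset.mem_filter.mp heA).1
    have hpersist : ∀ m, m ∈ A r → m + 1 ∈ S r → m + 1 ∈ A r := by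
      intro m hm hm1
      obtain ⟨hmS, hactm⟩ := Finset.mem_filter.mp hm
      rw [hact] at hactm
      obtain ⟨i, hi, hfin⟩ := hactm
      have hreg : (π (m+1)).1.2 = (π m).1.2 := hregS r hm1 hmS
      have hi' : i ∉ (π (m+1)).1.2 := by rw [hreg]; exact hi
      have hstep := (counter_step hπ m i hi').2
      have hlt : (π m).2 i - 1 < ⊤ :=
        lt_of_le_of_lt tsub_le_self (lt_top_iff_ne_top.mpr hfin)
      exact Finset.mem_filter.mpr ⟨hm1, ⟨i, hi', (lt_of_le_of_lt hstep hlt).ne⟩⟩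
    have hd : ∀ d, (A r).min' h + d ≤ (A r).max' h → (A r).min' h + d ∈ A r := by
      intro d
      induction d with
      | zero => intro _; simpa using hfA
      | succ d ih =>
        intro hle
        have hdd : (A r).min' h + d ∈ A r := ih (by omega)
        have hS1 : (A r).min' h + d + 1 ∈ S r := hsqueeze r hfS heS (by omega) (by omega)
        have := hpersist _ hdd hS1
        simpa [Nat.add_assoc] using this
    intro m hm1 hm2
    have := hd (m - (A r).min' h) (by omega)
    rwa [Nat.add_sub_cancel' hm1] at this
  have hcardA : ∀ r (h : (A r).Nonempty), (A r).card = (A r).max' h + 1 - (A r).min' h := by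
    intro r h
    have : A r = Finset.Icc ((A r).min' h) ((A r).max' h) := by
      ext x
      constructor
      · intro hx; exact Finset.mem_Icc.mpr ⟨Finset.min'_le _ x hx, Finset.le_max' _ x hx⟩
      · intro hx; exact hItv r h x (Finset.mem_Icc.mp hx).1 (Finset.mem_Icc.mp hx).2
    have h2 := congrArg Finset.card this
    rw [Nat.card_Icc] at h2
    exact h2
  -- the key amortized bound on active parts
  have key : ∀ r, r ∈ RA → (∑ r' ∈ RA.filter (· ≤ r), (A r').card) + B r ≤
      ∑ r' ∈ RA.filter (· ≤ r), (2 * B r' + (nV - (C r').card)) := by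
    intro r
    induction r using Nat.strong_induction_on with
    | _ r IH =>
    intro hr
    have h : (A r).Nonempty := (Finset.mem_filter.mp hr).2
    set f := (A r).min' h with hf
    set e := (A r).max' h with he
    have hfA : f ∈ A r := Finset.min'_mem _ h
    have heA : e ∈ A r := Finset.max'_mem _ h
    have hfS : f ∈ S r := (Finset.mem_filter.mp hfA).1
    have heS : e ∈ S r := (Finset.mem_filter.mp heA).1
    have hfe : f ≤ e := Finset.min'_le _ _ heA
    have hft : f ≤ t := ((hSmem r f).mp hfS).1
    have hfr : (π f).1.2.ncard = r := ((hSmem r f).mp hfS).2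
    have hactf : act f := (Finset.mem_filter.mp hfA).2
    rw [hact] at hactf
    obtain ⟨i0, hi0, hfin⟩ := hactf
    -- within-section decrease
    have hdec : ∀ d, f + d ≤ e →
        i0 ∉ (π (f+d)).1.2 ∧ (π (f+d)).2 i0 + ((d:ℕ):ℕ∞) ≤ (π f).2 i0 := by
      intro d
      induction d with
      | zero => intro _; exact ⟨hi0, by simp⟩
      | succ d ih =>
        intro hle
        obtain ⟨hnotin, hbound⟩ := ih (by omega)
        have hdS : f + d ∈ S r := hsqueeze r hfS heS (by omega) (by omega)
        have hdS1 : f + (d+1) ∈ S r := hsqueeze r hfS heS (by omega) (by omega)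
        have hregd : (π (f+(d+1))).1.2 = (π (f+d)).1.2 := hregS r hdS1 hdS
        have hnotin1 : i0 ∉ (π (f+(d+1))).1.2 := by rw [hregd]; exact hnotin
        have hstep := counter_step hπ (f+d) i0 hnotin1
        refine ⟨hnotin1, ?_⟩
        push_cast
        calc (π (f+(d+1))).2 i0 + (((d:ℕ):ℕ∞) + 1)
            = ((π (f+(d+1))).2 i0 + 1) + ((d:ℕ):ℕ∞) := by ring
          _ ≤ (((π (f+d)).2 i0 - 1) + 1) + ((d:ℕ):ℕ∞) :=
              add_le_add_left (add_le_add_left hstep.2 1) _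
          _ = (π (f+d)).2 i0 + ((d:ℕ):ℕ∞) := by
              rw [tsub_add_cancel_of_le hstep.1.le]
          _ ≤ (π f).2 i0 := hbound
    set g := ((π f).2 i0).toNat with hgdef
    have hgc : ((g:ℕ):ℕ∞) = (π f).2 i0 := ENat.coe_toNat hfin
    have hcard : (A r).card = e + 1 - f := hcardA r h
    have hng : f < e → (A r).card ≤ g := by
      intro hef
      have h1 := hdec (e - 1 - f) (by omega)
      have heq : f + (e - 1 - f) = e - 1 := by omega
      rw [heq] at h1
      have hi0e : i0 ∉ (π (e-1+1)).1.2 := by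
        rw [show e - 1 + 1 = e from by omega, hregS r heS hfS]
        exact hi0
      have h2 := (counter_step hπ (e-1) i0 hi0e).1
      have h3 : (2:ℕ∞) ≤ (π (e-1)).2 i0 := by
        have := (ENat.add_one_le_iff (by simp : (1:ℕ∞) ≠ ⊤)).mpr h2
        simpa [one_add_one_eq_two] using this
      have h4 : ((e + 1 - f : ℕ) : ℕ∞) ≤ ((g:ℕ):ℕ∞) := by
        rw [hgc]
        calc ((e+1-f:ℕ):ℕ∞) = 2 + ((e-1-f : ℕ):ℕ∞) := by
              rw [show (e+1-f:ℕ) = 2 + (e-1-f) from by omega]; push_cast; ring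
          _ ≤ (π (e-1)).2 i0 + ((e-1-f:ℕ):ℕ∞) := add_le_add_left h3 _
          _ ≤ (π f).2 i0 := h1.2
      rw [hcard]
      exact_mod_cast h4
    -- birth of the witness counter
    obtain ⟨b, hbf, hint, hown, hbval, hbd⟩ := birth_bound hπ hπ0 f i0 hi0 hfin
    set r0 := (π b).1.2.ncard with hr0def
    have hbt : b ≤ t := hbf.trans hft
    have hbS : b ∈ S r0 := (hSmem r0 b).mpr ⟨hbt, rfl⟩
    have hbA : b ∈ A r0 :=
      Finset.mem_filter.mpr ⟨hbS, ⟨i0, (hint b le_rfl hbf).1, (hint b le_rfl hbf).2⟩⟩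
    have hr0RA : r0 ∈ RA :=
      Finset.mem_filter.mpr ⟨Finset.mem_Icc.mpr ⟨hsec_lb b, hsec_ub b⟩, ⟨b, hbA⟩⟩
    have hr0r : r0 ≤ r := by rw [← hfr]; exact hncmono hbf
    have hBr0 : B r0 = mR lam {w | w.2 = (π b).1.2} := by
      simp only [hB]
      have h0 : (A r0).Nonempty := ⟨b, hbA⟩
      rw [dif_pos h0]
      exact congrArg (fun s => mR lam {w : XV V P | w.2 = s})
        (hregS r0 (Finset.mem_filter.mp (Finset.min'_mem _ h0)).1 hbS)
    have hbd' : g + (f - b) ≤ B r0 := by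
      have hcast : ((g + (f-b) : ℕ) : ℕ∞) ≤ ((B r0 : ℕ) : ℕ∞) := by
        rw [hBr0]
        push_cast
        rw [hgc]
        exact hbd
      exact_mod_cast hcast
    -- the sum over strictly smaller active sections
    have hprev : ∑ r' ∈ RA.filter (· < r), (A r').card ≤
        ∑ r' ∈ RA.filter (· < r), (2 * B r' + (nV - (C r').card)) := by
      rcases (RA.filter (· < r)).eq_empty_or_nonempty with hE | hNE
      · rw [hE]; simp
      · set r2 := (RA.filter (· < r)).max' hNE with hr2
        have hr2m := Finset.max'_mem _ hNE
        have hr2RA : r2 ∈ RA := (Finset.mem_filter.mp hr2m).1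
        have hr2r : r2 < r := (Finset.mem_filter.mp hr2m).2
        have hflt : RA.filter (· ≤ r2) = RA.filter (· < r) := by
          ext x
          simp only [Finset.mem_filter]
          constructor
          · rintro ⟨hx, hle⟩
            exact ⟨hx, lt_of_le_of_lt (by simpa using hle) hr2r⟩
          · rintro ⟨hx, hlt⟩
            exact ⟨hx, Finset.le_max' _ x (Finset.mem_filter.mpr ⟨hx, by simpa using hlt⟩)⟩
        have hIH2 := IH r2 hr2r hr2RA
        rw [hflt] at hIH2
        omega
    have hnotmem : r ∉ RA.filter (· < r) := by simp
    have hins : RA.filter (· ≤ r) = insert r (RA.filter (· < r)) := by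
      ext x
      simp only [Finset.mem_insert, Finset.mem_filter]
      constructor
      · rintro ⟨hx, hle⟩
        rcases eq_or_lt_of_le (by simpa using hle : x ≤ r) with hh | hh
        · exact Or.inl hh
        · exact Or.inr ⟨hx, hh⟩
      · rintro (rfl | ⟨hx, hlt⟩)
        · exact ⟨hr, by simp⟩
        · exact ⟨hx, by simpa using hlt.le⟩
    have hsum_le : ∀ (G : ℕ → ℕ), ∑ r' ∈ RA.filter (· ≤ r), G r' =
        G r + ∑ r' ∈ RA.filter (· < r), G r' := by
      intro G
      rw [hins, Finset.sum_insert hnotmem]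
    by_cases hfresh : r0 = r
    · -- the witness counter was born inside the section
      have hbfeq : b = f := by
        refine le_antisymm hbf (Finset.min'_le _ b ?_)
        rw [← hfresh] at hfA ⊢
        exact hbA
      rw [hbfeq] at hbval hown
      by_cases hcz : (π f).2 i0 = 0
      · -- a zero-birth: section is a single active position, use the calm refund
        have hef : e = f := by
          by_contra hne
          have hef' : f < e := lt_of_le_of_ne hfe (Ne.symm hne)
          have hfS1 : f + 1 ∈ S r := hsqueeze r hfS heS (by omega) (by omega)
          have hi0f1 : i0 ∉ (π (f+1)).1.2 := by rw [hregS r hfS1 hfS]; exact hi0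
          have hlt1 := (counter_step hπ f i0 hi0f1).1
          rw [hcz] at hlt1
          simp at hlt1
        have hcard1 : (A r).card = 1 := by rw [hcard, hef]; omega
        have hlam0 : lam (π f).1 = 0 := by rw [← hbval]; exact hcz
        have hbad := hcalm_bad r f hfA i0 hown hi0 hlam0
        rw [hsum_le, hsum_le]
        omega
      · -- a positive birth: the active part is at most `B r` long
        have hg1 : 1 ≤ g := by
          rcases Nat.eq_zero_or_pos g with h0 | h1
          · exfalso
            apply hcz
            rw [← hgc, h0]
            simp
          · exact h1
        have hnle : (A r).card ≤ g := by
          rcases lt_or_eq_of_le hfe with hef | hef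
          · exact hng hef
          · rw [hcard, ← hef]
            omega
        have hfb0 : f - b = 0 := by omega
        have hBr0r : B r0 = B r := by rw [hfresh]
        rw [hsum_le, hsum_le]
        omega
    · -- the witness counter was carried over from an earlier section
      have hr0lt : r0 < r := lt_of_le_of_ne hr0r hfresh
      have hbff : b < f := by
        rcases lt_or_eq_of_le hbf with hlt | heq
        · exact hlt
        · exfalso
          apply hfresh
          rw [hr0def, heq, hfr]
      set RAmid := RA.filter (fun r' => r0 < r' ∧ r' < r) with hRAmid
      have hmidsub : ∀ r' ∈ RAmid, A r' ⊆ Finset.Ioo b f := by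
        intro r' hr' k hk
        obtain ⟨hr'RA, hr'lt⟩ := Finset.mem_filter.mp hr'
        have hkS : k ∈ S r' := (Finset.mem_filter.mp hk).1
        have hkr' : (π k).1.2.ncard = r' := ((hSmem r' k).mp hkS).2
        refine Finset.mem_Ioo.mpr ⟨?_, ?_⟩
        · by_contra hle
          push_neg at hle
          have := hncmono hle
          rw [hkr'] at this
          rw [← hr0def] at this
          omega
        · by_contra hle
          push_neg at hle
          have := hncmono hle
          rw [hkr', hfr] at this
          omega
      have hmiddisj : ∀ x ∈ RAmid, ∀ y ∈ RAmid, x ≠ y → Disjoint (A x) (A y) := by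
        intro x hx y hy hxy
        rw [Finset.disjoint_left]
        intro k hkx hky
        have h1 : (π k).1.2.ncard = x := ((hSmem x k).mp (Finset.mem_filter.mp hkx).1).2
        have h2 : (π k).1.2.ncard = y := ((hSmem y k).mp (Finset.mem_filter.mp hky).1).2
        exact hxy (h1 ▸ h2)
      have hmid : ∑ r' ∈ RAmid, (A r').card ≤ f - b - 1 := by
        calc ∑ r' ∈ RAmid, (A r').card = (RAmid.biUnion A).card :=
              (Finset.card_biUnion hmiddisj).symm
          _ ≤ (Finset.Ioo b f).card := by
              refine Finset.card_le_card ?_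
              intro k hk
              obtain ⟨r', hr', hk2⟩ := Finset.mem_biUnion.mp hk
              exact hmidsub r' hr' hk2
          _ = f - b - 1 := by rw [Nat.card_Ioo]
      have hnmid : (A r).card + ∑ r' ∈ RAmid, (A r').card ≤ B r0 := by
        rcases lt_or_eq_of_le hfe with hef | hef
        · have := hng hef
          omega
        · have hcard1 : (A r).card = 1 := by rw [hcard, ← hef]; omega
          omega
      have hpartition : RA.filter (· ≤ r) = insert r ((RA.filter (· ≤ r0)) ∪ RAmid) := by
        ext x
        simp only [Finset.mem_insert, Finset.mem_union, Finset.mem_filter, hRAmid]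
        constructor
        · rintro ⟨hx, hle⟩
          rcases eq_or_lt_of_le (by simpa using hle : x ≤ r) with hh | hh
          · exact Or.inl hh
          · rcases le_or_gt x r0 with h2 | h2
            · exact Or.inr (Or.inl ⟨hx, by simpa using h2⟩)
            · exact Or.inr (Or.inr ⟨hx, h2, hh⟩)
        · rintro (rfl | ⟨hx, hle⟩ | ⟨hx, h1, h2⟩)
          · exact ⟨hr, le_rfl⟩
          · exact ⟨hx, le_trans hle hr0r⟩
          · exact ⟨hx, h2.le⟩
      have hdisj1 : r ∉ (RA.filter (· ≤ r0)) ∪ RAmid := by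
        simp only [Finset.mem_union, Finset.mem_filter, hRAmid]
        rintro (⟨-, hc⟩ | ⟨-, -, hc⟩)
        · have hc' : r ≤ r0 := hc
          omega
        · omega
      have hdisj2 : Disjoint (RA.filter (· ≤ r0)) RAmid := by
        rw [Finset.disjoint_left]
        intro x hx hx2
        have h1 : x ≤ r0 := by simpa using (Finset.mem_filter.mp hx).2
        have h2 := (Finset.mem_filter.mp hx2).2
        omega
      have hsum3 : ∀ (G : ℕ → ℕ), ∑ r' ∈ RA.filter (· ≤ r), G r' =
          G r + (∑ r' ∈ RA.filter (· ≤ r0), G r' + ∑ r' ∈ RAmid, G r') := by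
        intro G
        rw [hpartition, Finset.sum_insert hdisj1, Finset.sum_union hdisj2]
      have hIH0 := IH r0 hr0lt hr0RA
      rw [hsum3, hsum3]
      omega
  -- identify the budgets with the quantities in the statement
  have hRAmem : ∀ r ∈ RA, c0 ≤ r ∧ r ≤ cP :=
    fun r hr => Finset.mem_Icc.mp (Finset.mem_filter.mp hr).1
  have hBc0 : c0 ∈ RA → B c0 = mR lam {w | w.2 = J ℓ} := by
    intro hc0RA
    have h0 : (A c0).Nonempty := (Finset.mem_filter.mp hc0RA).2
    simp only [hB]
    rw [dif_pos h0]
    have hmS : (A c0).min' h0 ∈ S c0 := (Finset.mem_filter.mp (Finset.min'_mem _ h0)).1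
    have hnc : (π ((A c0).min' h0)).1.2.ncard = c0 := ((hSmem _ _).mp hmS).2
    have hregJ : (π ((A c0).min' h0)).1.2 = J ℓ := by
      refine (Set.eq_of_subset_of_ncard_le (hJsub _) ?_ (Set.toFinite _)).symm
      rw [hnc]
    rw [hregJ]
  have hBM : ∀ r ∈ RA, r ≠ c0 → B r ≤ M r := by
    intro r hrRA hne
    have h0 : (A r).Nonempty := (Finset.mem_filter.mp hrRA).2
    have hmS : (A r).min' h0 ∈ S r := (Finset.mem_filter.mp (Finset.min'_mem _ h0)).1
    have hnc : (π ((A r).min' h0)).1.2.ncard = r := ((hSmem _ _).mp hmS).2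
    obtain ⟨j, hj1, hjN, hjreg⟩ := hcover (π ((A r).min' h0)).1 (reach hπ hπ0 _)
    have hlj : ℓ < j := by
      have hsub : J ℓ ⊆ J j := hjreg ▸ hJsub ((A r).min' h0)
      rcases lt_or_eq_of_le (hmono ℓ j hℓ1 hℓN hj1 hjN hsub) with hlt | heq
      · exact hlt
      · exfalso
        apply hne
        rw [← hnc, hjreg, ← heq]
    have hBr : B r = mR lam {w | w.2 = J j} := by
      simp only [hB]
      rw [dif_pos h0, hjreg]
    rw [hM, hBr]
    refine le_csSup ?_ ⟨j, hlj, hjN, by rw [← hjreg, hnc], rfl⟩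
    refine Set.Finite.bddAbove (Set.Finite.subset
      ((Set.finite_Iic N).image (fun j => mR lam {w | w.2 = J j})) ?_)
    rintro c ⟨j', h1, h2, h3, rfl⟩
    exact ⟨j', h2, rfl⟩
  -- sums over all sections reduce to sums over active sections
  have hA_Icc : ∑ r ∈ Finset.Icc c0 cP, (A r).card = ∑ r ∈ RA, (A r).card := by
    refine (Finset.sum_subset (Finset.filter_subset _ _) ?_).symm
    intro x hx hnx
    have hAe : ¬ (A x).Nonempty := fun hne => hnx (Finset.mem_filter.mpr ⟨hx, hne⟩)
    rw [Finset.not_nonempty_iff_eq_empty.mp hAe]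
    simp
  have hactive : ∑ r ∈ RA, (A r).card ≤ ∑ r ∈ RA, (2 * B r + (nV - (C r).card)) := by
    rcases RA.eq_empty_or_nonempty with hE | hNE
    · rw [hE]; simp
    · have hrmRA : RA.max' hNE ∈ RA := Finset.max'_mem _ hNE
      have hfl : RA.filter (· ≤ RA.max' hNE) = RA := by
        ext x
        simp only [Finset.mem_filter]
        exact ⟨fun hx => hx.1, fun hx => ⟨hx, Finset.le_max' _ x hx⟩⟩
      have hk := key (RA.max' hNE) hrmRA
      rw [hfl] at hk
      omega
  have h2B : ∑ r ∈ RA, 2 * B r ≤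
      2 * mR lam {w | w.2 = J ℓ} + ∑ r ∈ Finset.Icc (c0+1) cP, 2 * M r := by
    have hsub : RA.erase c0 ⊆ Finset.Icc (c0+1) cP := by
      intro x hx
      obtain ⟨hne, hxRA⟩ := Finset.mem_erase.mp hx
      have hmem := hRAmem x hxRA
      exact Finset.mem_Icc.mpr ⟨by omega, hmem.2⟩
    have herase : ∑ r ∈ RA.erase c0, 2 * B r ≤ ∑ r ∈ Finset.Icc (c0+1) cP, 2 * M r := by
      calc ∑ r ∈ RA.erase c0, 2 * B r ≤ ∑ r ∈ RA.erase c0, 2 * M r := by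
            refine Finset.sum_le_sum ?_
            intro x hx
            obtain ⟨hne, hxRA⟩ := Finset.mem_erase.mp hx
            have := hBM x hxRA hne
            omega
        _ ≤ ∑ r ∈ Finset.Icc (c0+1) cP, 2 * M r :=
            Finset.sum_le_sum_of_subset hsub
    by_cases hc0RA : c0 ∈ RA
    · have hsum := Finset.add_sum_erase _ (fun r => 2 * B r) hc0RA
      have hBc := hBc0 hc0RA
      omega
    · rw [Finset.erase_eq_of_notMem hc0RA] at herase
      omega
  -- counting
  have hc0cP : c0 ≤ cP := (hsec_lb 0).trans (hsec_ub 0)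
  have htot1 : t + 1 = ∑ r ∈ Finset.Icc c0 cP, (C r).card +
      ∑ r ∈ Finset.Icc c0 cP, (A r).card := by
    rw [hpart, ← Finset.sum_add_distrib]
    exact Finset.sum_congr rfl (fun r _ => hsplit r)
  have hcalm_tot : ∑ r ∈ Finset.Icc c0 cP, (C r).card + ∑ r ∈ RA, (nV - (C r).card) ≤
      (cP - c0 + 1) * nV := by
    have hsplitC : ∑ r ∈ RA, (C r).card +
        ∑ r ∈ (Finset.Icc c0 cP).filter (fun r => ¬ (A r).Nonempty), (C r).card =
        ∑ r ∈ Finset.Icc c0 cP, (C r).card := by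
      rw [hRA]
      exact Finset.sum_filter_add_sum_filter_not _ _ _
    have h1 : ∑ r ∈ RA, ((C r).card + (nV - (C r).card)) = RA.card * nV := by
      rw [Finset.sum_congr rfl (fun x _ => by have := hcalm x; omega : ∀ x ∈ RA,
        (C x).card + (nV - (C x).card) = nV)]
      rw [Finset.sum_const, smul_eq_mul]
    have h2 : ∑ r ∈ (Finset.Icc c0 cP).filter (fun r => ¬ (A r).Nonempty), (C r).card ≤
        ((Finset.Icc c0 cP).filter (fun r => ¬ (A r).Nonempty)).card * nV := by
      calc ∑ r ∈ (Finset.Icc c0 cP).filter (fun r => ¬ (A r).Nonempty), (C r).card ≤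
          ∑ _r ∈ (Finset.Icc c0 cP).filter (fun r => ¬ (A r).Nonempty), nV :=
            Finset.sum_le_sum (fun x _ => hcalm x)
        _ = _ := by rw [Finset.sum_const, smul_eq_mul]
    have h3 : RA.card + ((Finset.Icc c0 cP).filter (fun r => ¬ (A r).Nonempty)).card =
        (Finset.Icc c0 cP).card := by
      rw [hRA]
      exact Finset.card_filter_add_card_filter_not _
    have h4 : (Finset.Icc c0 cP).card = cP - c0 + 1 := by
      rw [Nat.card_Icc]
      omega
    have h5 : ∑ r ∈ RA, ((C r).card + (nV - (C r).card)) =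
        ∑ r ∈ RA, (C r).card + ∑ r ∈ RA, (nV - (C r).card) := Finset.sum_add_distrib
    have hid : (cP - c0 + 1) * nV = RA.card * nV +
        ((Finset.Icc c0 cP).filter (fun r => ¬ (A r).Nonempty)).card * nV := by
      rw [← Nat.add_mul, h3, h4]
    omega
  have hactive2 : ∑ r ∈ RA, (2 * B r + (nV - (C r).card)) =
      ∑ r ∈ RA, 2 * B r + ∑ r ∈ RA, (nV - (C r).card) := Finset.sum_add_distrib
  have hgoalsum : ∑ r ∈ Finset.Icc (c0+1) cP, (nV + 2 * M r) =
      (cP - c0) * nV + ∑ r ∈ Finset.Icc (c0+1) cP, 2 * M r := by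
    rw [Finset.sum_add_distrib, Finset.sum_const, smul_eq_mul, Nat.card_Icc]
    congr 1
    congr 1
    omega
  have hringid : (cP - c0 + 1) * nV = (cP - c0) * nV + nV := by ring
  rw [hgoalsum]
  omega

end SPE
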